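/- arXiv:1207.6890 — 2 statements merged into one kernel-verified Lean document; each statement's English description precedes it below -/
import Mathlib

section
/- Let A be a unital C*-algebra, let k ≥ 2, and let T be a k×k matrix over A such that every diagonal entry of T equals 1, T is self-adjoint (i.e. T_{ji} = (T_{ij})* for all i, j), and η := max_{i≠j} ‖T_{ij}‖ satisfies η < 1/(2(k−1)). Then T is a positive and invertible element of M_k(A), ‖T − 1_k‖ ≤ (k−1)η, and ‖T^{−1/2} − 1_k‖ ≤ 2(k−1)η, where 1_k denotes the identity of M_k(A). -/
open scoped NNReal ENNReal

private lemma key_ineq {ε x : ℝ} (hε0 : 0 ≤ ε) (hεh : ε < 1/2) (hx1 : 1 - ε ≤ x) (hx2 : x ≤ 1 + ε) :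
    |(Real.sqrt x)⁻¹ - 1| ≤ 2 * ε := by
  have hx0 : (0:ℝ) < x := by linarith
  set s := Real.sqrt x with hs_def
  have hs : 0 < s := Real.sqrt_pos.mpr hx0
  have hs2 : s ^ 2 = x := Real.sq_sqrt hx0.le
  have hshalf : (1:ℝ)/2 < s := by nlinarith
  have hsub : s ≤ 1 + ε := by nlinarith
  rw [abs_le]
  constructor
  · have h1 : (1 - 2*ε) * s ≤ 1 := by nlinarith
    have h2 := mul_le_mul_of_nonneg_right h1 (inv_nonneg.mpr hs.le)
    rw [mul_assoc, mul_inv_cancel₀ hs.ne', mul_one, one_mul] at h2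
    linarith
  · have h1 : 1 - s ≤ 2*ε*s := by nlinarith
    have h2 := mul_le_mul_of_nonneg_right h1 (inv_nonneg.mpr hs.le)
    rw [sub_mul, one_mul, mul_inv_cancel₀ hs.ne', mul_assoc, mul_inv_cancel₀ hs.ne', mul_one] at h2
    linarith


/-- Lemma 1 of the paper. `B`, together with the ⋆-algebra isomorphism `ψ`,
plays the role of `M_k(A)` equipped with its unique C*-norm. -/
theorem stmt_0 {A : Type*} [CStarAlgebra A] {k : ℕ} (hk : 2 ≤ k)
    {B : Type*} [CStarAlgebra B] [PartialOrder B] [StarOrderedRing B]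
    (ψ : Matrix (Fin k) (Fin k) A ≃⋆ₐ[ℂ] B)
    (T : Matrix (Fin k) (Fin k) A)
    (hdiag : ∀ i, T i i = 1)
    (hsa : ∀ i j, T j i = star (T i j))
    (η : ℝ) (hη : ∀ i j, i ≠ j → ‖T i j‖ ≤ η)
    (hηlt : η < 1 / (2 * ((k : ℝ) - 1))) :
    0 ≤ ψ T ∧ IsUnit (ψ T) ∧ ‖ψ T - 1‖ ≤ ((k : ℝ) - 1) * η ∧
      ‖Ring.inverse (CFC.sqrt (ψ T)) - 1‖ ≤ 2 * ((k : ℝ) - 1) * η := by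
  classical
  have hk1 : (1:ℝ) ≤ (k:ℝ) - 1 := by
    have : (2:ℝ) ≤ (k:ℝ) := by exact_mod_cast hk
    linarith
  have hne : (⟨0, by omega⟩ : Fin k) ≠ ⟨1, by omega⟩ := by
    simp [Fin.ext_iff]
  have hη0 : 0 ≤ η := le_trans (norm_nonneg _) (hη _ _ hne)
  set ε : ℝ := ((k:ℝ) - 1) * η with hε_def
  have hε0 : 0 ≤ ε := mul_nonneg (by linarith) hη0
  have hεhalf : ε < 1/2 := by
    have hk0 : (0:ℝ) < (k:ℝ) - 1 := by linarith
    calc ε < ((k:ℝ)-1) * (1/(2*((k:ℝ)-1))) := by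
          exact mul_lt_mul_of_pos_left hηlt hk0
      _ = 1/2 := by rw [mul_one_div, div_eq_div_iff (by linarith) (by norm_num : (2:ℝ) ≠ 0)]; ring
  obtain hB | hB := subsingleton_or_nontrivial B
  · refine ⟨le_of_eq (Subsingleton.elim _ _), isUnit_of_subsingleton _, ?_, ?_⟩
    · rw [Subsingleton.elim (ψ T - 1) 0, norm_zero]; exact hε0
    · rw [Subsingleton.elim (Ring.inverse (CFC.sqrt (ψ T)) - 1) 0, norm_zero]
      have : 0 ≤ 2 * ε := by linarith
      linarith [this]
  -- nontrivial case
  haveI : Nontrivial (Matrix (Fin k) (Fin k) A) := by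
    obtain ⟨x, y, hxy⟩ := exists_pair_ne B
    exact ⟨ψ.symm x, ψ.symm y, fun h => hxy (EquivLike.injective ψ.symm h)⟩
  haveI : Nontrivial A := by
    by_contra h
    rw [not_nontrivial_iff_subsingleton] at h
    haveI : Subsingleton (Matrix (Fin k) (Fin k) A) :=
      (inferInstance : Subsingleton (Fin k → Fin k → A))
    exact false_of_nontrivial_of_subsingleton (Matrix (Fin k) (Fin k) A)
  haveI : Nonempty (Fin k) := ⟨⟨0, by omega⟩⟩
  letI : SeminormedRing (Matrix (Fin k) (Fin k) A) := Matrix.linftyOpSemiNormedRing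
  letI : NormedRing (Matrix (Fin k) (Fin k) A) := Matrix.linftyOpNormedRing
  letI : NormedAlgebra ℂ (Matrix (Fin k) (Fin k) A) := Matrix.linftyOpNormedAlgebra
  -- selfadjointness
  have hTsa : IsSelfAdjoint T := by
    show star T = T
    ext i j
    rw [Matrix.star_apply, hsa i j, star_star]
  have hsaB : IsSelfAdjoint (ψ T) := by
    rw [IsSelfAdjoint, ← map_star ψ T, hTsa.star_eq]
  -- norm bound on T - 1
  have key : ∀ i : Fin k, ∑ j, ‖(T - 1) i j‖ ≤ ε := by
    intro i
    have h0 : ‖(T - 1) i i‖ = 0 := by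
      simp [Matrix.sub_apply, hdiag i, Matrix.one_apply_eq]
    calc ∑ j, ‖(T - 1) i j‖
        = ‖(T - 1) i i‖ + ∑ j ∈ Finset.univ.erase i, ‖(T - 1) i j‖ :=
          (Finset.add_sum_erase _ _ (Finset.mem_univ i)).symm
      _ = ∑ j ∈ Finset.univ.erase i, ‖(T - 1) i j‖ := by rw [h0, zero_add]
      _ ≤ (Finset.univ.erase i).card • η := by
          refine Finset.sum_le_card_nsmul _ _ η fun j hj => ?_
          have hji : j ≠ i := Finset.ne_of_mem_erase hj
          rw [Matrix.sub_apply, Matrix.one_apply_ne' hji, sub_zero]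
          exact hη i j (Ne.symm hji)
      _ = ε := by
          rw [Finset.card_erase_of_mem (Finset.mem_univ i), Finset.card_univ, Fintype.card_fin,
            nsmul_eq_mul, hε_def, Nat.cast_sub (by omega), Nat.cast_one]
  have hTnorm : ‖T - (1 : Matrix (Fin k) (Fin k) A)‖ ≤ ε := by
    rw [Matrix.linfty_opNorm_def]
    refine le_trans (NNReal.coe_le_coe.mpr (Finset.sup_le fun i _ => ?_)) (le_of_eq (Real.coe_toNNReal ε hε0))
    rw [← NNReal.coe_le_coe, Real.coe_toNNReal ε hε0, NNReal.coe_sum]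
    simpa using key i
  -- norm bound on ψ T - 1
  have hT1sa : IsSelfAdjoint (T - (1 : Matrix (Fin k) (Fin k) A)) := hTsa.sub (IsSelfAdjoint.one _)
  have hmap : ψ T - 1 = ψ (T - 1) := by rw [map_sub, map_one]
  have hnormB : ‖ψ T - 1‖ ≤ ε := by
    have hsaB1 : IsSelfAdjoint (ψ (T - 1)) := by
      rw [IsSelfAdjoint, ← map_star ψ, hT1sa.star_eq]
    have h2 : (‖ψ (T - 1)‖₊ : ℝ≥0∞) = spectralRadius ℂ (ψ (T - 1)) :=
      hsaB1.spectralRadius_eq_nnnorm.symm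
    have h3 : spectralRadius ℂ (ψ (T - 1)) = spectralRadius ℂ (T - 1) := by
      unfold spectralRadius
      rw [AlgEquiv.spectrum_eq ψ (T - 1)]
    have h4 : spectralRadius ℂ (T - (1 : Matrix (Fin k) (Fin k) A)) ≤ ‖T - (1 : Matrix (Fin k) (Fin k) A)‖₊ :=
      by haveI : @CompleteSpace (Matrix (Fin k) (Fin k) A) (inferInstance : NormedRing (Matrix (Fin k) (Fin k) A)).toPseudoMetricSpace.toUniformSpace := (inferInstance : CompleteSpace (Fin k → Fin k → A)); exact spectrum.spectralRadius_le_nnnorm _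
    have h5 : (‖ψ (T - 1)‖₊ : ℝ≥0∞) ≤ ‖T - (1 : Matrix (Fin k) (Fin k) A)‖₊ := by
      rw [h2, h3]; exact h4
    rw [hmap]
    calc ‖ψ (T - 1)‖ ≤ ‖T - (1 : Matrix (Fin k) (Fin k) A)‖ := by
          exact_mod_cast ENNReal.coe_le_coe.mp h5
      _ ≤ ε := hTnorm
  -- spectrum bound
  have hspec : ∀ x ∈ spectrum ℝ (ψ T), (1 - ε ≤ x ∧ x ≤ 1 + ε) := by
    intro x hx
    have hx1 : x - 1 ∈ spectrum ℝ (ψ T - algebraMap ℝ B 1) := by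
      rw [← spectrum.sub_singleton_eq]
      exact Set.sub_mem_sub hx rfl
    have h := spectrum.norm_le_norm_of_mem hx1
    rw [map_one] at h
    have h' : |x - 1| ≤ ε := by
      rw [← Real.norm_eq_abs]; exact h.trans hnormB
    rw [abs_le] at h'
    constructor <;> linarith [h'.1, h'.2]
  -- positivity
  have hpos : (0 : B) ≤ ψ T := by
    have := cfc_nonneg (R := ℝ) (a := ψ T) (f := (id : ℝ → ℝ))
      (fun x hx => by have := (hspec x hx).1; simpa using by linarith)
    rwa [cfc_id ℝ (ψ T) hsaB] at this
  -- invertibility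
  have hunit : IsUnit (ψ T) := by
    rw [← spectrum.zero_notMem_iff ℝ]
    intro h0
    have := (hspec 0 h0).1
    linarith
  refine ⟨hpos, hunit, hnormB, ?_⟩
  -- sqrt as real cfc
  have hsqrt : CFC.sqrt (ψ T) = cfc Real.sqrt (ψ T) := by
    rw [CFC.sqrt_eq_cfc, cfc_nnreal_eq_real NNReal.sqrt (ψ T) hpos]
    exact cfc_congr fun x hx => by
      rw [Real.coe_sqrt, Real.coe_toNNReal x (by linarith [(hspec x hx).1])]
  have hs0 : ∀ x ∈ spectrum ℝ (ψ T), Real.sqrt x ≠ 0 := fun x hx =>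
    (Real.sqrt_ne_zero'.mpr (by linarith [(hspec x hx).1]))
  have hcont : ContinuousOn (fun x : ℝ => (Real.sqrt x)⁻¹) (spectrum ℝ (ψ T)) :=
    Real.continuous_sqrt.continuousOn.inv₀ hs0
  have hmul1 : cfc (fun x : ℝ => (Real.sqrt x)⁻¹) (ψ T) * CFC.sqrt (ψ T) = 1 := by
    rw [hsqrt, ← cfc_mul _ _ (ψ T) hcont Real.continuous_sqrt.continuousOn]
    calc cfc (fun x : ℝ => (Real.sqrt x)⁻¹ * Real.sqrt x) (ψ T)
        = cfc (fun _ : ℝ => (1:ℝ)) (ψ T) := cfc_congr fun x hx => inv_mul_cancel₀ (hs0 x hx)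
      _ = 1 := cfc_const_one ℝ (ψ T)
  have hmul2 : CFC.sqrt (ψ T) * cfc (fun x : ℝ => (Real.sqrt x)⁻¹) (ψ T) = 1 := by
    rw [hsqrt, ← cfc_mul _ _ (ψ T) Real.continuous_sqrt.continuousOn hcont]
    calc cfc (fun x : ℝ => Real.sqrt x * (Real.sqrt x)⁻¹) (ψ T)
        = cfc (fun _ : ℝ => (1:ℝ)) (ψ T) := cfc_congr fun x hx => mul_inv_cancel₀ (hs0 x hx)
      _ = 1 := cfc_const_one ℝ (ψ T)
  have hinv : Ring.inverse (CFC.sqrt (ψ T)) = cfc (fun x : ℝ => (Real.sqrt x)⁻¹) (ψ T) := by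
    let u : Bˣ := ⟨CFC.sqrt (ψ T), cfc (fun x : ℝ => (Real.sqrt x)⁻¹) (ψ T), hmul2, hmul1⟩
    exact Ring.inverse_unit u
  rw [hinv, show (1 : B) = cfc (fun _ : ℝ => (1:ℝ)) (ψ T) from (cfc_const_one ℝ (ψ T)).symm,
    ← cfc_sub _ _ (ψ T) hcont continuousOn_const]
  have h2ε : 2 * ((k:ℝ) - 1) * η = 2 * ε := by rw [hε_def]; ring
  rw [h2ε]
  refine norm_cfc_le (by linarith) fun x hx => ?_
  obtain ⟨hx1, hx2⟩ := hspec x hx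
  rw [Real.norm_eq_abs]
  exact key_ineq hε0 hεhalf hx1 hx2
end

section
/- For every integer k ≥ 3 and every ε > 0 there exist projections p₁,…,p_k in the C*-algebra M_k(ℂ) of k×k complex matrices such that: (1) p₁ + ⋯ + p_k is invertible; (2) the unital *-subalgebra generated by p₁,…,p_k is all of M_k(ℂ); and (3) for all i ≠ j, p_i is unitarily equivalent to p_j in M_k(ℂ) and ‖p_i p_j‖ < ε. -/
open scoped Matrix.Norms.L2Operator

noncomputable section Stmt6Aux
open Matrix

variable (k : ℕ) (c : ℝ)

/-- basic delta-sum computation -/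
lemma st6_sum_delta (x y : ℝ) (i j : Fin k) :
    ∑ a : Fin k, ((if a = i then (1:ℝ) else 0) + x) * ((if a = j then (1:ℝ) else 0) + y) =
      (if i = j then (1:ℝ) else 0) + x + y + k * (x * y) := by
  have : ∀ a : Fin k, ((if a = i then (1:ℝ) else 0) + x) * ((if a = j then (1:ℝ) else 0) + y) =
      (if a = i then (1:ℝ) else 0) * (if a = j then (1:ℝ) else 0)
        + (if a = i then (1:ℝ) else 0) * y + (if a = j then (1:ℝ) else 0) * x + x * y := by
    intro a; ring
  rw [Finset.sum_congr rfl fun a _ => this a]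
  simp [Finset.sum_add_distrib, ite_mul, Finset.sum_ite_eq', Finset.card_univ, mul_comm, eq_comm]
  ring

def st6N : ℝ := (Real.sqrt (1 + 2*c + k*c^2))⁻¹

def st6v (i a : Fin k) : ℂ := ((st6N k c * ((if a = i then 1 else 0) + c) : ℝ) : ℂ)

def st6p (i : Fin k) : Matrix (Fin k) (Fin k) ℂ := vecMulVec (st6v k c i) (st6v k c i)

def st6sR (i j : Fin k) : ℝ := st6N k c ^ 2 * ((if i = j then 1 else 0) + (2*c + k*c^2))

variable {k c}

lemma st6_n2_pos (hc : 0 < c) : (0:ℝ) < 1 + 2*c + k*c^2 := by positivity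

lemma st6_N_pos (hc : 0 < c) : 0 < st6N k c := by
  rw [st6N]; exact inv_pos.2 (Real.sqrt_pos.2 (st6_n2_pos hc))

lemma st6_hN2 (hc : 0 < c) : st6N k c ^ 2 * (1 + 2*c + k*c^2) = 1 := by
  rw [st6N, inv_pow, Real.sq_sqrt (st6_n2_pos hc).le]
  exact inv_mul_cancel₀ (st6_n2_pos hc).ne'

lemma st6v_symm (i a : Fin k) : st6v k c i a = st6v k c a i := by
  simp only [st6v, eq_comm]

/-- real version of the inner-product computation -/
lemma st6_sum_real (i j : Fin k) :
    ∑ a, (st6N k c * ((if a = i then 1 else 0) + c)) * (st6N k c * ((if a = j then 1 else 0) + c))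
      = st6sR k c i j := by
  have : ∀ a : Fin k,
      (st6N k c * ((if a = i then 1 else 0) + c)) * (st6N k c * ((if a = j then 1 else 0) + c))
      = st6N k c ^ 2 * (((if a = i then 1 else 0) + c) * ((if a = j then 1 else 0) + c)) := by
    intro a; ring
  rw [Finset.sum_congr rfl fun a _ => this a, ← Finset.mul_sum, st6_sum_delta, st6sR]
  ring

lemma st6_sum (i j : Fin k) :
    ∑ a, st6v k c i a * st6v k c j a = ((st6sR k c i j : ℝ) : ℂ) := by
  rw [← st6_sum_real i j]
  push_cast [st6v]
  rfl

lemma st6_sR_pos (hc : 0 < c) (i j : Fin k) : 0 < st6sR k c i j := by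
  have hN := st6_N_pos (k := k) hc
  rw [st6sR]
  have : (0:ℝ) < (if i = j then (1:ℝ) else 0) + (2*c + k*c^2) := by
    split <;> nlinarith [sq_nonneg c, (Nat.cast_nonneg k : (0:ℝ) ≤ k)]
  positivity

lemma st6_sR_self (hc : 0 < c) (i : Fin k) : st6sR k c i i = 1 := by
  have := st6_hN2 (k := k) hc
  rw [st6sR, if_pos rfl]; linarith [this]; 

lemma st6_mul (i j : Fin k) :
    st6p k c i * st6p k c j = ((st6sR k c i j : ℝ) : ℂ) • vecMulVec (st6v k c i) (st6v k c j) := by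
  ext a b
  simp only [st6p, mul_apply, vecMulVec_apply, Matrix.smul_apply, smul_eq_mul]
  calc ∑ x, st6v k c i a * st6v k c i x * (st6v k c j x * st6v k c j b)
      = (∑ x, st6v k c i x * st6v k c j x) * (st6v k c i a * st6v k c j b) := by
        rw [Finset.sum_mul]; exact Finset.sum_congr rfl fun x _ => by ring
    _ = _ := by rw [st6_sum]

lemma st6_herm (i : Fin k) : (st6p k c i)ᴴ = st6p k c i := by
  ext a b
  simp [st6p, Matrix.star_apply, vecMulVec_apply, st6v, ← Complex.ofReal_mul, mul_comm]

lemma st6_idem (hc : 0 < c) (i : Fin k) : st6p k c i * st6p k c i = st6p k c i := by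
  rw [st6_mul, st6_sR_self hc]
  simp [st6p]

/-- product of two "identity plus constant" matrices -/
lemma st6_delta_mul_delta (m m' x y : ℝ) (hm : m * m' = 1) (hxy : x + y + k*(x*y) = 0) :
    (Matrix.of fun a b : Fin k => ((m * ((if a = b then 1 else 0) + x) : ℝ) : ℂ)) *
    (Matrix.of fun a b : Fin k => ((m' * ((if a = b then 1 else 0) + y) : ℝ) : ℂ)) = 1 := by
  ext a b
  rw [mul_apply]
  have : ∀ e : Fin k, (Matrix.of fun a b : Fin k => ((m * ((if a = b then 1 else 0) + x) : ℝ) : ℂ)) a e *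
      (Matrix.of fun a b : Fin k => ((m' * ((if a = b then 1 else 0) + y) : ℝ) : ℂ)) e b
      = (((m * m') * (((if e = a then 1 else 0) + x) * ((if e = b then 1 else 0) + y)) : ℝ) : ℂ) := by
    intro e
    simp only [Matrix.of_apply, ← Complex.ofReal_mul, eq_comm]
    norm_cast
    ring
  rw [Finset.sum_congr rfl fun e _ => this e, ← Complex.ofReal_sum, ← Finset.mul_sum, hm,
    st6_sum_delta]
  by_cases hab : a = b <;> simp [hab, one_apply, hxy] <;> norm_cast <;> linarith [hxy]


lemma st6_sum_p :
    (∑ i, st6p k c i) =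
      Matrix.of fun a b : Fin k =>
        ((st6N k c ^ 2 * ((if a = b then 1 else 0) + (2*c + k*c^2)) : ℝ) : ℂ) := by
  ext a b
  rw [Matrix.sum_apply]
  have : ∀ i : Fin k, st6p k c i a b = st6v k c a i * st6v k c b i := by
    intro i
    simp only [st6p, vecMulVec_apply]
    rw [st6v_symm i a, st6v_symm i b]
  rw [Finset.sum_congr rfl fun i _ => this i, st6_sum a b]
  simp [st6sR]

lemma st6_isUnit (hc : 0 < c) : IsUnit (∑ i, st6p k c i) := by
  have hN := st6_N_pos (k := k) hc
  set d : ℝ := 2*c + k*c^2 with hd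
  have hdpos : 0 < d := by
    have : (0:ℝ) ≤ k*c^2 := by positivity
    nlinarith
  have hdk : (0:ℝ) < 1 + d * k := by
    have : (0:ℝ) ≤ d * k := by positivity
    linarith
  set e : ℝ := -d / (1 + d * k) with he
  have hm : st6N k c ^ 2 * (st6N k c ^ 2)⁻¹ = 1 := by
    field_simp
  have hxy : d + e + k * (d * e) = 0 := by
    rw [he]; field_simp; ring
  have hm' : (st6N k c ^ 2)⁻¹ * st6N k c ^ 2 = 1 := by rw [mul_comm]; exact hm
  have hxy' : e + d + k * (e * d) = 0 := by rw [mul_comm e d]; linarith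
  rw [st6_sum_p]
  exact ⟨⟨_, Matrix.of fun a b : Fin k =>
      (((st6N k c ^ 2)⁻¹ * ((if a = b then 1 else 0) + e) : ℝ) : ℂ),
    st6_delta_mul_delta _ _ _ _ hm hxy, st6_delta_mul_delta _ _ _ _ hm' hxy'⟩, rfl⟩

def st6V (k : ℕ) (c : ℝ) : Matrix (Fin k) (Fin k) ℂ := Matrix.of fun a b => st6v k c b a

lemma st6_V_eq : st6V k c = Matrix.of fun a b : Fin k =>
    ((st6N k c * ((if a = b then 1 else 0) + c) : ℝ) : ℂ) := rfl

lemma st6_VW (hc : 0 < c) : ∃ W, st6V k c * W = 1 ∧ W * st6V k c = 1 := by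
  have hN := st6_N_pos (k := k) hc
  have hck : (0:ℝ) < 1 + c * k := by positivity
  set e : ℝ := -c / (1 + c * k) with he
  have hm : st6N k c * (st6N k c)⁻¹ = 1 := by field_simp
  have hxy : c + e + k * (c * e) = 0 := by rw [he]; field_simp; ring
  have hm' : (st6N k c)⁻¹ * st6N k c = 1 := by rw [mul_comm]; exact hm
  have hxy' : e + c + k * (e * c) = 0 := by rw [mul_comm e c]; linarith
  refine ⟨Matrix.of fun a b : Fin k => (((st6N k c)⁻¹ * ((if a = b then 1 else 0) + e) : ℝ) : ℂ),
    ?_, ?_⟩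
  · rw [st6_V_eq]; exact st6_delta_mul_delta _ _ _ _ hm hxy
  · rw [st6_V_eq]; exact st6_delta_mul_delta _ _ _ _ hm' hxy'

lemma st6_VBV (B : Matrix (Fin k) (Fin k) ℂ) :
    st6V k c * B * st6V k c =
      ∑ i, ∑ j, B i j • vecMulVec (st6v k c i) (st6v k c j) := by
  ext a b
  rw [mul_apply]
  have h1 : ∀ x : Fin k, (st6V k c * B) a x * st6V k c x b
      = ∑ i, st6v k c i a * B i x * st6v k c x b := by
    intro x
    rw [mul_apply, Finset.sum_mul]
    refine Finset.sum_congr rfl fun i _ => ?_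
    rw [st6V]; simp only [Matrix.of_apply]; rw [st6v_symm b x]
  rw [Finset.sum_congr rfl fun x _ => h1 x, Finset.sum_comm]
  have h2 : ∀ i : Fin k, (∑ j, B i j • vecMulVec (st6v k c i) (st6v k c j)) a b
      = ∑ x, st6v k c i a * B i x * st6v k c x b := by
    intro i
    rw [Matrix.sum_apply]
    refine Finset.sum_congr rfl fun x _ => ?_
    rw [Matrix.smul_apply, vecMulVec_apply, smul_eq_mul, st6v_symm x b]
    ring
  rw [Matrix.sum_apply]
  exact (Finset.sum_congr rfl fun i _ => (h2 i).symm)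

lemma st6_adjoin (hc : 0 < c) : StarAlgebra.adjoin ℂ (Set.range (st6p k c)) = ⊤ := by
  rw [eq_top_iff]
  intro A _
  set T := StarAlgebra.adjoin ℂ (Set.range (st6p k c)) with hT
  have hp : ∀ i, st6p k c i ∈ T := fun i => StarAlgebra.subset_adjoin ℂ _ ⟨i, rfl⟩
  have hq : ∀ i j, vecMulVec (st6v k c i) (st6v k c j) ∈ T := by
    intro i j
    have h1 : st6p k c i * st6p k c j ∈ T := mul_mem (hp i) (hp j)
    have h2 : (((st6sR k c i j : ℝ) : ℂ))⁻¹ • (st6p k c i * st6p k c j)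
        = vecMulVec (st6v k c i) (st6v k c j) := by
      rw [st6_mul, smul_smul, inv_mul_cancel₀, one_smul]
      exact_mod_cast (st6_sR_pos hc i j).ne'
    rw [← h2]
    exact SMulMemClass.smul_mem _ h1
  obtain ⟨W, hVW, hWV⟩ := st6_VW (k := k) hc
  have hA : A = st6V k c * (W * A * W) * st6V k c := by
    calc A = (st6V k c * W) * A * (W * st6V k c) := by rw [hVW, hWV]; simp
    _ = st6V k c * (W * A * W) * st6V k c := by noncomm_ring
  rw [hA, st6_VBV]
  exact sum_mem fun i _ => sum_mem fun j _ => SMulMemClass.smul_mem _ (hq i j)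


def st6u (k : ℕ) (i j : Fin k) : Matrix (Fin k) (Fin k) ℂ :=
  Matrix.of fun a b => if Equiv.swap i j a = b then 1 else 0

lemma st6u_swap_iff (i j a b : Fin k) : Equiv.swap i j b = a ↔ Equiv.swap i j a = b := by
  constructor
  · rintro rfl; simp
  · rintro rfl; simp

lemma st6u_star (i j : Fin k) : star (st6u k i j) = st6u k i j := by
  ext a b
  simp only [Matrix.star_apply, st6u, Matrix.of_apply, apply_ite (star : ℂ → ℂ), star_one,
    star_zero]
  rw [if_congr (st6u_swap_iff i j a b) rfl rfl]

lemma st6u_mul_self (i j : Fin k) : st6u k i j * st6u k i j = 1 := by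
  ext a b
  rw [mul_apply]
  have h : ∀ x : Fin k, st6u k i j a x * st6u k i j x b
      = if Equiv.swap i j a = x then st6u k i j x b else 0 := by
    intro x
    by_cases h1 : Equiv.swap i j a = x <;> by_cases h2 : Equiv.swap i j x = b <;>
      simp [st6u, h1, h2]
  rw [Finset.sum_congr rfl fun x _ => h x, Finset.sum_ite_eq]
  simp [st6u, Matrix.one_apply, Equiv.swap_apply_self]

lemma st6u_mem_unitary (i j : Fin k) : st6u k i j ∈ unitary (Matrix (Fin k) (Fin k) ℂ) := by
  rw [Unitary.mem_iff, st6u_star, st6u_mul_self]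
  exact ⟨rfl, rfl⟩

lemma st6v_swap (i j a : Fin k) : st6v k c i (Equiv.swap i j a) = st6v k c j a := by
  have h : (Equiv.swap i j a = i) ↔ (a = j) := by
    constructor
    · intro h
      have := congrArg (Equiv.swap i j) h
      simpa [Equiv.swap_apply_left] using this
    · rintro rfl; simp [Equiv.swap_apply_right]
  simp only [st6v, h]

lemma st6u_conj (i j : Fin k) :
    st6u k i j * st6p k c i * star (st6u k i j) = st6p k c j := by
  rw [st6u_star]
  have hup : st6u k i j * st6p k c i =
      Matrix.of fun a b => st6p k c i (Equiv.swap i j a) b := by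
    ext a b
    rw [mul_apply]
    simp [st6u, ite_mul, Finset.sum_ite_eq]
  have hpu : (Matrix.of fun a b => st6p k c i (Equiv.swap i j a) b) * st6u k i j =
      Matrix.of fun a b => st6p k c i (Equiv.swap i j a) (Equiv.swap i j b) := by
    ext a b
    rw [mul_apply]
    have : ∀ x : Fin k, (Matrix.of fun a b => st6p k c i (Equiv.swap i j a) b) a x
        * st6u k i j x b
        = if x = Equiv.swap i j b then st6p k c i (Equiv.swap i j a) x else 0 := by
      intro x
      simp only [st6u, Matrix.of_apply, mul_ite, mul_one, mul_zero]
      exact if_congr ((st6u_swap_iff i j b x).trans eq_comm) rfl rfl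
    rw [Finset.sum_congr rfl fun x _ => this x, Finset.sum_ite_eq' Finset.univ]
    simp
  rw [hup, hpu]
  ext a b
  simp only [Matrix.of_apply, st6p, vecMulVec_apply, st6v_swap]


lemma st6v_conj (i a : Fin k) : (starRingEnd ℂ) (st6v k c i a) = st6v k c i a :=
  Complex.conj_ofReal _

lemma st6_norm_v (hc : 0 < c) (i : Fin k) :
    ‖((WithLp.equiv 2 (Fin k → ℂ)).symm (st6v k c i) : EuclideanSpace ℂ (Fin k))‖ = 1 := by
  rw [EuclideanSpace.norm_eq]
  have : ∀ a : Fin k,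
      ‖((WithLp.equiv 2 (Fin k → ℂ)).symm (st6v k c i) : EuclideanSpace ℂ (Fin k)) a‖ ^ 2
      = (st6N k c * ((if a = i then 1 else 0) + c)) * (st6N k c * ((if a = i then 1 else 0) + c)) := by
    intro a
    change ‖st6v k c i a‖ ^ 2 = _
    rw [st6v, Complex.norm_real, Real.norm_eq_abs, sq_abs]
    ring
  rw [Finset.sum_congr rfl fun a _ => this a, st6_sum_real i i, st6_sR_self hc, Real.sqrt_one]

lemma st6_norm_q (hc : 0 < c) (i j : Fin k) :
    ‖vecMulVec (st6v k c i) (st6v k c j)‖ ≤ 1 := by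
  rw [Matrix.l2_opNorm_def]
  refine ContinuousLinearMap.opNorm_le_bound _ zero_le_one fun x => ?_
  rw [one_mul]
  set vi : EuclideanSpace ℂ (Fin k) := (WithLp.equiv 2 (Fin k → ℂ)).symm (st6v k c i) with hvi
  set vj : EuclideanSpace ℂ (Fin k) := (WithLp.equiv 2 (Fin k → ℂ)).symm (st6v k c j) with hvj
  have hval : (LinearEquiv.trans Matrix.toEuclideanLin LinearMap.toContinuousLinearMap)
        (vecMulVec (st6v k c i) (st6v k c j)) x
      = (inner ℂ vj x : ℂ) • vi := by
    apply (WithLp.equiv 2 (Fin k → ℂ)).injective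
    change _ = (inner ℂ vj x : ℂ) • WithLp.equiv 2 (Fin k → ℂ) vi
    funext a
    have hL : WithLp.equiv 2 (Fin k → ℂ)
        ((LinearEquiv.trans Matrix.toEuclideanLin LinearMap.toContinuousLinearMap)
          (vecMulVec (st6v k c i) (st6v k c j)) x)
        = (vecMulVec (st6v k c i) (st6v k c j)) *ᵥ (WithLp.equiv 2 (Fin k → ℂ) x) := rfl
    rw [hL]
    show ∑ b, (st6v k c i a * st6v k c j b) * (WithLp.equiv 2 (Fin k → ℂ) x) b
      = (inner ℂ vj x : ℂ) * st6v k c i a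
    rw [PiLp.inner_apply]
    rw [Finset.sum_mul]
    refine Finset.sum_congr rfl fun b _ => ?_
    have : (inner ℂ (vj b) (x b) : ℂ) = (starRingEnd ℂ) (vj b) * x b := by rw [RCLike.inner_apply]; ring
    have hvjb : vj b = st6v k c j b := rfl
    have hxb : (WithLp.equiv 2 (Fin k → ℂ) x) b = x b := rfl
    rw [hxb, hvjb, RCLike.inner_apply, st6v_conj]
    ring
  rw [hval, norm_smul, hvi, st6_norm_v hc i, mul_one]
  calc ‖(inner ℂ vj x : ℂ)‖ ≤ ‖vj‖ * ‖x‖ := norm_inner_le_norm _ _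
    _ = ‖x‖ := by rw [hvj, st6_norm_v hc j, one_mul]

end Stmt6Aux

/-- for every `k ≥ 3`, `M_k(ℂ)` is generated by `k` mutually unitarily
equivalent and almost mutually orthogonal projections. Here `M_k(ℂ)` carries the
operator (C*-) norm. -/
theorem stmt_6 {k : ℕ} (hk : 3 ≤ k) :
    ∀ ε > (0 : ℝ), ∃ p : Fin k → Matrix (Fin k) (Fin k) ℂ,
      (∀ i, IsSelfAdjoint (p i) ∧ p i * p i = p i) ∧
      IsUnit (∑ i, p i) ∧
      StarAlgebra.adjoin ℂ (Set.range p) = ⊤ ∧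
      ∀ i j, i ≠ j →
        (∃ u ∈ unitary (Matrix (Fin k) (Fin k) ℂ), u * p i * star u = p j) ∧
        ‖p i * p j‖ < ε := by
  intro ε hε
  have hk3 : (3:ℝ) ≤ (k:ℝ) := by exact_mod_cast hk
  have hkpos : (0:ℝ) < (k:ℝ) + 3 := by linarith
  set c : ℝ := min ε 1 / ((k:ℝ) + 3) with hcdef
  have hmin : 0 < min ε 1 := lt_min hε one_pos
  have hc : 0 < c := div_pos hmin hkpos
  have heq : ((k:ℝ) + 3) * c = min ε 1 := by
    rw [hcdef, mul_div_cancel₀ _ hkpos.ne']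
  have hkc : (k:ℝ) * c ≤ 1 := by nlinarith [min_le_right ε 1]
  have hsR : ∀ i j : Fin k, i ≠ j → st6sR k c i j < ε := by
    intro i j hij
    have hN2le : st6N k c ^ 2 ≤ 1 := by
      have h := st6_hN2 (k := k) hc
      nlinarith [mul_nonneg (sq_nonneg (st6N k c)) (show (0:ℝ) ≤ 2*c + (k:ℝ)*c^2 by positivity)]
    have hd : (0:ℝ) ≤ 2*c + (k:ℝ)*c^2 := by positivity
    have h1 : st6sR k c i j ≤ 2*c + (k:ℝ)*c^2 := by
      rw [st6sR, if_neg hij, zero_add]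
      nlinarith [sq_nonneg (st6N k c)]
    have h3 : (k:ℝ)*c^2 ≤ c := by nlinarith
    have h5 : 3*c < ε := by nlinarith [min_le_left ε 1]
    linarith
  refine ⟨st6p k c, fun i => ⟨st6_herm i, st6_idem hc i⟩, st6_isUnit hc, st6_adjoin hc,
    fun i j hij => ⟨⟨st6u k i j, st6u_mem_unitary i j, st6u_conj i j⟩, ?_⟩⟩
  rw [st6_mul i j, norm_smul]
  have h1 : ‖((st6sR k c i j : ℝ) : ℂ)‖ = st6sR k c i j := by
    rw [Complex.norm_real, Real.norm_eq_abs, abs_of_pos (st6_sR_pos hc i j)]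
  calc ‖((st6sR k c i j : ℝ) : ℂ)‖ * ‖Matrix.vecMulVec (st6v k c i) (st6v k c j)‖
      ≤ ‖((st6sR k c i j : ℝ) : ℂ)‖ * 1 := by
        refine mul_le_mul_of_nonneg_left (st6_norm_q hc i j) (norm_nonneg _)
    _ = st6sR k c i j := by rw [mul_one, h1]
    _ < ε := hsR i j hij
end
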